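/- In W, the elements s₁s₃ and s₂s₄ commute, and the subgroup of W generated by s₁s₃ and s₂s₄ is isomorphic to ℤ × ℤ (free abelian of rank 2). In particular W contains a subgroup isomorphic to ℤ × ℤ. -/

import Mathlib

/-- The Coxeter matrix of the 4-cycle: off-diagonal entries are `2` for cyclically adjacent
indices and `0` (i.e. `∞`) for the two opposite pairs. -/
def C4 : CoxeterMatrix (Fin 4) where
  M := Matrix.of fun i j : Fin 4 ↦
    if i = j then 1
    else if (i.val + 1) % 4 = j.val ∨ (j.val + 1) % 4 = i.val then 2 else 0
  off_diagonal := by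
    intro i i' h
    fin_cases i <;> fin_cases i' <;> simp_all

/-- `W`, the right-angled Coxeter group of the 4-cycle. -/
abbrev W : Type := C4.Group

/-- The simple reflections `s₁, s₂, s₃, s₄` of `W`, indexed by `Fin 4`
(so `s 0 = s₁`, `s 1 = s₂`, `s 2 = s₃`, `s 3 = s₄`). -/
def s (i : Fin 4) : W := C4.simple i

open DihedralGroup in
def f4 : Fin 4 → DihedralGroup 0 × DihedralGroup 0 :=
  ![(sr 0, 1), (1, sr 0), (sr 1, 1), (1, sr 1)]

lemma hf4 : C4.IsLiftable f4 := by
  intro i i'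
  fin_cases i <;> fin_cases i' <;>
    simp [f4, C4, Matrix.of_apply, pow_succ, Prod.ext_iff, DihedralGroup.sr_mul_sr,
      Prod.mul_def] <;> (intro h; exact absurd h (by decide))

noncomputable def φ : W →* DihedralGroup 0 × DihedralGroup 0 :=
  C4.toCoxeterSystem.lift ⟨f4, hf4⟩

lemma φ_s (i : Fin 4) : φ (s i) = f4 i :=
  C4.toCoxeterSystem.lift_apply_simple hf4 i

lemma r_one_zpow (x : ℤ) : (DihedralGroup.r 1 : DihedralGroup 0) ^ x = DihedralGroup.r x := by
  cases x with
  | ofNat n => simp [DihedralGroup.r_one_pow n]; rfl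
  | negSucc n =>
    rw [zpow_negSucc, DihedralGroup.r_one_pow]
    refine inv_eq_of_mul_eq_one_right ?_
    erw [DihedralGroup.r_mul_r, DihedralGroup.one_def]
    congr 1
    rw [Int.negSucc_eq]
    push_cast
    exact (by ring : (n:ℤ) + 1 + -((n:ℤ) + 1) = 0)

lemma comm13 : Commute (s 0 * s 2) (s 1 * s 3) := by
  have key : ∀ i j : Fin 4, C4.M i j = 2 → Commute (s i) (s j) := by
    intro i j h
    have := C4.toCoxeterSystem.simple_mul_simple_pow i j
    rw [CoxeterMatrix.toCoxeterSystem_simple] at this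
    rw [h] at this
    have h2 : s i * s j * (s i * s j) = 1 := by
      have := this; rwa [pow_two] at this
    have hii : s i * s i = 1 := by
      have := C4.toCoxeterSystem.simple_mul_simple_self i
      rwa [CoxeterMatrix.toCoxeterSystem_simple] at this
    have hjj : s j * s j = 1 := by
      have := C4.toCoxeterSystem.simple_mul_simple_self j
      rwa [CoxeterMatrix.toCoxeterSystem_simple] at this
    have hi : (s i)⁻¹ = s i := inv_eq_of_mul_eq_one_right hii
    have hj : (s j)⁻¹ = s j := inv_eq_of_mul_eq_one_right hjj
    have hij : (s i * s j)⁻¹ = s i * s j := inv_eq_of_mul_eq_one_right h2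
    show s i * s j = s j * s i
    conv_lhs => rw [← hij]
    rw [mul_inv_rev, hi, hj]
  have c01 : Commute (s 0) (s 1) := key 0 1 (by decide)
  have c03 : Commute (s 0) (s 3) := key 0 3 (by decide)
  have c21 : Commute (s 2) (s 1) := key 2 1 (by decide)
  have c23 : Commute (s 2) (s 3) := key 2 3 (by decide)
  exact (c01.mul_left c21).mul_right (c03.mul_left c23)

noncomputable abbrev a : W := s 0 * s 2
noncomputable abbrev b : W := s 1 * s 3

noncomputable def ψ : Multiplicative (ℤ × ℤ) →* W where
  toFun p := a ^ (p.toAdd.1) * b ^ (p.toAdd.2)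
  map_one' := by simp
  map_mul' p q := by
    have hc : Commute a b := comm13
    have : Commute (b ^ p.toAdd.2) (a ^ q.toAdd.1) := (hc.symm.zpow_zpow _ _)
    simp only [toAdd_mul, Prod.fst_add, Prod.snd_add, zpow_add]
    exact this.symm.mul_mul_mul_comm _ _

lemma φψ (p : Multiplicative (ℤ × ℤ)) :
    φ (ψ p) = (DihedralGroup.r p.toAdd.1, DihedralGroup.r p.toAdd.2) := by
  have ha : φ a = (DihedralGroup.r 1, 1) := by
    simp [map_mul, φ_s, f4, Prod.mul_def, DihedralGroup.sr_mul_sr]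
  have hb : φ b = (1, DihedralGroup.r 1) := by
    simp [map_mul, φ_s, f4, Prod.mul_def, DihedralGroup.sr_mul_sr]
  show φ (a ^ p.toAdd.1 * b ^ p.toAdd.2) = _
  rw [map_mul, map_zpow, map_zpow, ha, hb, Prod.pow_def, Prod.pow_def, Prod.mul_def]
  simp [r_one_zpow, one_zpow, DihedralGroup.r_mul_r]
  exact ⟨rfl, rfl⟩

lemma ψ_inj : Function.Injective ψ := by
  rw [injective_iff_map_eq_one ψ] -- for MonoidHom
  intro p hp
  have := congrArg φ hp
  rw [φψ, map_one] at this
  have h1 : (DihedralGroup.r p.toAdd.1 : DihedralGroup 0) = DihedralGroup.r 0 := by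
    have := congrArg Prod.fst this; simpa [DihedralGroup.one_def, -DihedralGroup.r_zero] using this
  have h2 : (DihedralGroup.r p.toAdd.2 : DihedralGroup 0) = DihedralGroup.r 0 := by
    have := congrArg Prod.snd this; simpa [DihedralGroup.one_def, -DihedralGroup.r_zero] using this
  have e1 : p.toAdd.1 = 0 := DihedralGroup.r.inj h1
  have e2 : p.toAdd.2 = 0 := DihedralGroup.r.inj h2
  have : p.toAdd = 0 := Prod.ext e1 e2
  exact (Multiplicative.toAdd.injective (by simpa using this))

lemma range_eq : ψ.range = Subgroup.closure {a, b} := by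
  apply le_antisymm
  · rintro _ ⟨p, rfl⟩
    have haM : a ∈ Subgroup.closure {a, b} := Subgroup.subset_closure (by simp)
    have hbM : b ∈ Subgroup.closure {a, b} := Subgroup.subset_closure (by simp)
    exact mul_mem (zpow_mem haM _) (zpow_mem hbM _)
  · rw [Subgroup.closure_le]
    rintro x (rfl | rfl)
    · exact ⟨Multiplicative.ofAdd (1, 0), by show a ^ (1:ℤ) * b ^ (0:ℤ) = a; simp⟩
    · exact ⟨Multiplicative.ofAdd (0, 1), by show a ^ (0:ℤ) * b ^ (1:ℤ) = b; simp⟩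


/-- In `W`, the elements `s₁s₃` and `s₂s₄` commute, the subgroup they generate is free abelian
of rank 2 (isomorphic to `ℤ × ℤ`), and in particular `W` contains a subgroup
isomorphic to `ℤ × ℤ`. -/
theorem stmt0 :
    Commute (s 0 * s 2) (s 1 * s 3) ∧
    Nonempty ((Subgroup.closure {s 0 * s 2, s 1 * s 3} : Subgroup W) ≃*
      Multiplicative (ℤ × ℤ)) ∧
    ∃ H : Subgroup W, Nonempty (H ≃* Multiplicative (ℤ × ℤ)) := by
  have e : Multiplicative (ℤ × ℤ) ≃* (Subgroup.closure {a, b} : Subgroup W) :=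
    range_eq ▸ MonoidHom.ofInjective ψ_inj
  exact ⟨comm13, ⟨e.symm⟩, ⟨_, ⟨e.symm⟩⟩⟩
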